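/- The group ⟨a, b | a^3 = b^3 = (ab)^3 = 1⟩ has an infinite quotient: it surjects onto the group of affine transformations of the plane generated by two rotations of order 3 about distinct centers, and this image group is infinite. -/

import Mathlib

/-- The relators `a^3, b^3, (ab)^3` in the free group on two generators. -/
def rels2 : Set (FreeGroup (Fin 2)) :=
  {(FreeGroup.of 0) ^ 3, (FreeGroup.of 1) ^ 3, (FreeGroup.of 0 * FreeGroup.of 1) ^ 3}

/-- The group `⟨a, b | a^3 = b^3 = (ab)^3 = 1⟩` has an infinite quotient: it
surjects onto the group of affine transformations of the plane generated by two rotations of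
order 3 (rotation by a primitive cube root of unity) about distinct centers `p₁ ≠ p₂`, and this
image group is infinite. -/
theorem stmt_4 (p₁ p₂ : ℂ) (hp : p₁ ≠ p₂) (ω : ℂ) (hω1 : ω ≠ 1) (hω3 : ω ^ 3 = 1) :
    ∃ g₁ g₂ : ℂ ≃ᵃ[ℂ] ℂ,
      (∀ z, g₁ z = ω * (z - p₁) + p₁) ∧
      (∀ z, g₂ z = ω * (z - p₂) + p₂) ∧
      ∃ φ : PresentedGroup rels2 →* (ℂ ≃ᵃ[ℂ] ℂ),
        φ (PresentedGroup.of 0) = g₁ ∧ φ (PresentedGroup.of 1) = g₂ ∧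
        φ.range = Subgroup.closure {g₁, g₂} ∧
        Infinite (Subgroup.closure ({g₁, g₂} : Set (ℂ ≃ᵃ[ℂ] ℂ))) := by
  have hω0 : ω ≠ 0 := by rintro rfl; simp at hω3
  have hsum : ω ^ 2 + ω + 1 = 0 := by
    have h : (ω - 1) * (ω ^ 2 + ω + 1) = 0 := by linear_combination hω3
    rcases mul_eq_zero.mp h with h | h
    · exact absurd (sub_eq_zero.mp h) hω1
    · exact h
  set u : ℂˣ := Units.mk0 ω hω0 with hu
  have hu3 : u ^ 3 = 1 := by ext; push_cast; simpa [hu] using hω3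
  set g₁ : ℂ ≃ᵃ[ℂ] ℂ := AffineEquiv.homothetyUnitsMulHom p₁ u with hg₁def
  set g₂ : ℂ ≃ᵃ[ℂ] ℂ := AffineEquiv.homothetyUnitsMulHom p₂ u with hg₂def
  have hg₁ : ∀ z, g₁ z = ω * (z - p₁) + p₁ := by
    intro z
    show (AffineEquiv.homothetyUnitsMulHom p₁ u : ℂ → ℂ) z = _
    simp only [AffineEquiv.coe_homothetyUnitsMulHom_apply, AffineMap.homothety_apply,
      vsub_eq_sub, vadd_eq_add, smul_eq_mul]
    rfl
  have hg₂ : ∀ z, g₂ z = ω * (z - p₂) + p₂ := by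
    intro z
    show (AffineEquiv.homothetyUnitsMulHom p₂ u : ℂ → ℂ) z = _
    simp only [AffineEquiv.coe_homothetyUnitsMulHom_apply, AffineMap.homothety_apply,
      vsub_eq_sub, vadd_eq_add, smul_eq_mul]
    rfl
  have hg₁3 : g₁ ^ 3 = 1 := by
    rw [hg₁def, ← map_pow, hu3, map_one]
  have hg₂3 : g₂ ^ 3 = 1 := by
    rw [hg₂def, ← map_pow, hu3, map_one]
  have hg₁₂3 : (g₁ * g₂) ^ 3 = 1 := by
    ext z
    show g₁ (g₂ (g₁ (g₂ (g₁ (g₂ z))))) = z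
    simp only [hg₁, hg₂]
    linear_combination (z * (ω ^ 3 + 1)) * hω3 + ((ω ^ 2 - ω + 1) * (1 - ω) * (ω * p₂ + p₁)) * hsum
  refine ⟨g₁, g₂, hg₁, hg₂, ?_⟩
  have hrel : ∀ r ∈ rels2, FreeGroup.lift (fun i : Fin 2 => if i = 0 then g₁ else g₂) r = 1 := by
    intro r hr
    rcases hr with h | h | h <;> subst h <;> simp [hg₁3, hg₂3, hg₁₂3]
  refine ⟨PresentedGroup.toGroup hrel, PresentedGroup.toGroup.of hrel, PresentedGroup.toGroup.of hrel, ?_, ?_⟩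
  · rw [MonoidHom.range_eq_map, ← PresentedGroup.closure_range_of rels2,
      MonoidHom.map_closure]
    congr 1
    ext x
    simp only [Set.mem_image, Set.mem_range, Set.mem_insert_iff, Set.mem_singleton_iff]
    constructor
    · rintro ⟨_, ⟨i, rfl⟩, rfl⟩
      fin_cases i <;> simp [PresentedGroup.toGroup.of hrel]
    · rintro (rfl | rfl)
      · exact ⟨_, ⟨0, rfl⟩, by simp [PresentedGroup.toGroup.of hrel]⟩
      · exact ⟨_, ⟨1, rfl⟩, by simp [PresentedGroup.toGroup.of hrel]⟩
  · -- infiniteness via the translation g₁ * g₂⁻¹ = g₁ * g₂ * g₂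
    set c : ℂ := (1 - ω) * (p₁ - p₂) with hc
    have hc0 : c ≠ 0 := mul_ne_zero (sub_ne_zero.mpr (Ne.symm hω1)) (sub_ne_zero.mpr hp)
    have hinv : g₂⁻¹ = g₂ ^ 2 := by
      apply inv_eq_of_mul_eq_one_right
      calc g₂ * g₂ ^ 2 = g₂ ^ 3 := by group
      _ = 1 := hg₂3
    have ht : g₁ * g₂⁻¹ = AffineEquiv.constVAdd ℂ ℂ c := by
      rw [hinv]
      ext z
      show g₁ (g₂ (g₂ z)) = c + z
      simp only [hg₁, hg₂, hc]
      linear_combination (z - p₂) * hω3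
    have htmem : g₁ * g₂⁻¹ ∈ Subgroup.closure ({g₁, g₂} : Set (ℂ ≃ᵃ[ℂ] ℂ)) :=
      mul_mem (Subgroup.subset_closure (by simp))
        (inv_mem (Subgroup.subset_closure (by simp)))
    refine Infinite.of_injective
      (fun n : ℤ => (⟨g₁ * g₂⁻¹, htmem⟩ : Subgroup.closure ({g₁, g₂} : Set (ℂ ≃ᵃ[ℂ] ℂ))) ^ n) ?_
    intro m n h
    have h2 : (g₁ * g₂⁻¹) ^ m = (g₁ * g₂⁻¹) ^ n := by
      have := congrArg (Subtype.val) h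
      simpa using this
    rw [ht, ← AffineEquiv.constVAdd_zsmul, ← AffineEquiv.constVAdd_zsmul] at h2
    have h3 : (m • c : ℂ) = n • c := by
      have := congrFun (congrArg (fun e : ℂ ≃ᵃ[ℂ] ℂ => (e : ℂ → ℂ)) h2) 0
      simpa using this
    exact smul_left_injective ℤ hc0 h3
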